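/- arXiv:1312.0436 — 2 statements merged into one kernel-verified Lean document; each statement's English description precedes it below -/
import Mathlib

section
/- Let γ > 1, ε ∈ ℝ, and for r > 0 define δT(r) = −((γ−1)ε²/(8γπ²))·e^{1−r²}, ρ(r) = (1+δT(r))^{1/(γ−1)}, p(r) = (1+δT(r))^{γ/(γ−1)} and tangential velocity v_θ(r) = (ε/(2π))·e^{(1−r²)/2}·r. Assume 1 + δT(r) > 0 for all r > 0. Then the radial momentum balance p'(r) = ρ(r)·v_θ(r)²/r holds for every r > 0; i.e., the pressure gradient of the isentropic vortex exactly balances the centrifugal force, so the vortex is a stationary solution of the Euler equations in the comoving frame. -/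
noncomputable section

/-- for the stationary isentropic vortex, the pressure gradient exactly
balances the centrifugal force: p'(r) = ρ(r)·v_θ(r)²/r for every r > 0; hence the
vortex is a stationary solution of the Euler equations in the comoving frame. -/
theorem isentropic_vortex_radial_momentum_balance
    (γ ε : ℝ) (hγ : 1 < γ)
    (δT ρ p vθ : ℝ → ℝ)
    (hδT : ∀ r, δT r = -((γ - 1) * ε ^ 2 / (8 * γ * Real.pi ^ 2)) * Real.exp (1 - r ^ 2))
    (hρ : ∀ r, ρ r = (1 + δT r) ^ (1 / (γ - 1)))
    (hp : ∀ r, p r = (1 + δT r) ^ (γ / (γ - 1)))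
    (hvθ : ∀ r, vθ r = ε / (2 * Real.pi) * Real.exp ((1 - r ^ 2) / 2) * r)
    (hpos : ∀ r : ℝ, 0 < r → 0 < 1 + δT r) :
    ∀ r : ℝ, 0 < r → deriv p r = ρ r * (vθ r) ^ 2 / r := by
  intro r hr
  set C : ℝ := (γ - 1) * ε ^ 2 / (8 * γ * Real.pi ^ 2) with hC
  have hγ1 : γ - 1 ≠ 0 := by linarith
  have hπ : Real.pi ≠ 0 := Real.pi_ne_zero
  -- derivative of 1 + δT
  have h1 : HasDerivAt (fun x : ℝ => (1 : ℝ) - x ^ 2) (-(2 * r)) r := by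
    have := ((hasDerivAt_pow 2 r).const_sub 1)
    simpa using this
  have h2 : HasDerivAt (fun x : ℝ => 1 + δT x)
      (-C * (Real.exp (1 - r ^ 2) * (-(2 * r)))) r := by
    have he : HasDerivAt (fun x : ℝ => Real.exp (1 - x ^ 2))
        (Real.exp (1 - r ^ 2) * (-(2 * r))) r := h1.exp
    have := (he.const_mul (-C)).const_add 1
    have heq : (fun x : ℝ => 1 + -C * Real.exp (1 - x ^ 2)) = fun x : ℝ => 1 + δT x := by
      funext x; rw [hδT x]
    rwa [heq] at this
  -- derivative of p
  have hgr : (1 : ℝ) + δT r ≠ 0 := ne_of_gt (hpos r hr)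
  have h3 : HasDerivAt p
      (-C * (Real.exp (1 - r ^ 2) * (-(2 * r))) * (γ / (γ - 1)) *
        (1 + δT r) ^ (γ / (γ - 1) - 1)) r := by
    have := h2.rpow_const (p := γ / (γ - 1)) (Or.inl hgr)
    have heq : (fun x : ℝ => (1 + δT x) ^ (γ / (γ - 1))) = p := by
      funext x; rw [hp x]
    rwa [heq] at this
  rw [h3.deriv]
  have hexp : γ / (γ - 1) - 1 = 1 / (γ - 1) := by field_simp; ring
  rw [hexp, ← hρ r, hvθ r]
  have hsq : (Real.exp ((1 - r ^ 2) / 2)) ^ 2 = Real.exp (1 - r ^ 2) := by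
    rw [sq, ← Real.exp_add]; ring_nf
  have hγ0 : γ ≠ 0 := by positivity
  field_simp [hC]
  ring_nf
  have hsq' : Real.exp (1 / 2 + r ^ 2 * (-1 / 2)) ^ 2 = Real.exp (1 - r ^ 2) := by
    rw [show (1 / 2 + r ^ 2 * (-1 / 2) : ℝ) = (1 - r ^ 2) / 2 by ring]; exact hsq
  rw [hsq']
  have hCm : C * (8 * γ * Real.pi ^ 2) = (γ - 1) * ε ^ 2 := by
    rw [hC]; exact div_mul_cancel₀ _ (mul_ne_zero (mul_ne_zero (by norm_num) hγ0) (pow_ne_zero 2 hπ))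
  linear_combination Real.exp (1 - r ^ 2) * ρ r * hCm
end
end

section
/- Let 0 < r_i < r_e, 0 < ρ_i < ρ_e, set γ = 2 and uniform entropy s₀ = 1 (so p = ρ²), and define ρ₀(r) = ρ_i + ((r² − r_i²)/(r_e² − r_i²))·(ρ_e − ρ_i), the sound speeds c_{i,e}² = γ·ρ_{i,e} = 2ρ_{i,e}, the focalisation time τ = √( ((γ−1)/2)·(r_e² − r_i²)/(c_e² − c_i²) ), and the homothety rate h(t) = √(1 − t²/τ²) for 0 ≤ t < τ. Define the Eulerian fields at radius R ∈ [h(t)·r_i, h(t)·r_e]: density ρ(R,t) = ρ₀(R/h(t))/h(t)², radial velocity U(R,t) = h'(t)·R/h(t) = −tR/(τ²h(t)²), and pressure p(R,t) = ρ(R,t)². Then these fields satisfy the cylindrically symmetric isentropic Euler equations: the continuity equation ∂_t ρ + (1/R)·∂_R(R ρ U) = 0 and the radial momentum equation ∂_t U + U ∂_R U + (1/ρ)∂_R p = 0 hold at every point of the shell for 0 ≤ t < τ. This is Kidder's self-similar isentropic compression solution, in which each fluid particle initially at radius r is located at R(r,t) = h(t)·r. -/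
noncomputable section

/-- Partial derivative with respect to the first (radial) argument. -/
def dR (f : ℝ → ℝ → ℝ) (r t : ℝ) : ℝ := deriv (fun s => f s t) r
/-- Partial derivative with respect to the second (time) argument. -/
def dT (f : ℝ → ℝ → ℝ) (r t : ℝ) : ℝ := deriv (fun s => f r s) t

set_option maxHeartbeats 1000000 in
/-- Kidder's self-similar isentropic compression of a cylindrical shell
(γ = 2, uniform entropy s₀ = 1, so p = ρ²) satisfies the cylindrically symmetric
isentropic Euler equations at every point of the shell for 0 ≤ t < τ. -/
theorem kidder_self_similar_solution
    (r_i r_e ρ_i ρ_e : ℝ)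
    (hri : 0 < r_i) (hrie : r_i < r_e) (hρi : 0 < ρ_i) (hρie : ρ_i < ρ_e)
    (γ : ℝ) (hγ : γ = 2)
    (ρ₀ : ℝ → ℝ)
    (hρ₀ : ∀ r, ρ₀ r = ρ_i + ((r ^ 2 - r_i ^ 2) / (r_e ^ 2 - r_i ^ 2)) * (ρ_e - ρ_i))
    (ci2 ce2 : ℝ) (hci2 : ci2 = γ * ρ_i) (hce2 : ce2 = γ * ρ_e)
    (τ : ℝ) (hτ : τ = Real.sqrt (((γ - 1) / 2) * (r_e ^ 2 - r_i ^ 2) / (ce2 - ci2)))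
    (h : ℝ → ℝ) (hh : ∀ t, h t = Real.sqrt (1 - t ^ 2 / τ ^ 2))
    (ρ U p : ℝ → ℝ → ℝ)
    (hρ : ∀ R t, ρ R t = ρ₀ (R / h t) / (h t) ^ 2)
    (hU : ∀ R t, U R t = -(t * R) / (τ ^ 2 * (h t) ^ 2))
    (hp : ∀ R t, p R t = (ρ R t) ^ 2) :
    ∀ t : ℝ, 0 ≤ t → t < τ → ∀ R : ℝ, h t * r_i ≤ R → R ≤ h t * r_e →
      (dT ρ R t + (1 / R) * dR (fun a b => a * ρ a b * U a b) R t = 0) ∧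
      (dT U R t + U R t * dR U R t + (1 / ρ R t) * dR p R t = 0) := by
  subst hγ hci2 hce2
  have hre : 0 < r_e := hri.trans hrie
  have hr2 : r_i ^ 2 < r_e ^ 2 := by nlinarith
  have hdr : 0 < r_e ^ 2 - r_i ^ 2 := sub_pos.mpr hr2
  have hdρ : 0 < ρ_e - ρ_i := sub_pos.mpr hρie
  obtain ⟨A, hAdef⟩ : ∃ A : ℝ, A = (ρ_e - ρ_i) / (r_e ^ 2 - r_i ^ 2) := ⟨_, rfl⟩
  have hA : 0 < A := hAdef ▸ div_pos hdρ hdr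
  have harg : ((2:ℝ) - 1) / 2 * (r_e ^ 2 - r_i ^ 2) / (2 * ρ_e - 2 * ρ_i)
      = (r_e ^ 2 - r_i ^ 2) / (4 * (ρ_e - ρ_i)) := by
    rw [div_eq_div_iff (by nlinarith) (by nlinarith)]
    ring
  have hτ' : τ = Real.sqrt ((r_e ^ 2 - r_i ^ 2) / (4 * (ρ_e - ρ_i))) := by rw [hτ, harg]
  have hargpos : 0 < (r_e ^ 2 - r_i ^ 2) / (4 * (ρ_e - ρ_i)) := div_pos hdr (by nlinarith)
  have hτpos : 0 < τ := by rw [hτ']; exact Real.sqrt_pos.mpr hargpos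
  have hτne : τ ≠ 0 := ne_of_gt hτpos
  have hT : τ ^ 2 = (r_e ^ 2 - r_i ^ 2) / (4 * (ρ_e - ρ_i)) := by
    rw [hτ']; exact Real.sq_sqrt hargpos.le
  have hA4 : A = 1 / (4 * τ ^ 2) := by
    rw [hT, hAdef]
    field_simp
  obtain ⟨Ci, hCidef⟩ : ∃ C : ℝ, C = ρ_i - A * r_i ^ 2 := ⟨_, rfl⟩
  have hGpos : ∀ s : ℝ, s ^ 2 < τ ^ 2 → 0 < 1 - s ^ 2 / τ ^ 2 := by
    intro s hs
    rw [sub_pos, div_lt_one (by positivity)]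
    exact hs
  have hhs2 : ∀ s : ℝ, s ^ 2 < τ ^ 2 → h s ^ 2 = 1 - s ^ 2 / τ ^ 2 := by
    intro s hs
    rw [hh]
    exact Real.sq_sqrt (hGpos s hs).le
  have key : ∀ a s : ℝ, s ^ 2 < τ ^ 2 →
      ρ a s = Ci / (1 - s ^ 2 / τ ^ 2) + A * a ^ 2 / (1 - s ^ 2 / τ ^ 2) ^ 2 := by
    intro a s hs
    have hGs := hGpos s hs
    have h2 := hhs2 s hs
    have hst : τ ^ 2 - s ^ 2 ≠ 0 := by nlinarith
    have hhsne : h s ≠ 0 := by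
      intro h0
      rw [h0] at h2
      simp at h2
      nlinarith
    rw [hρ a s, hρ₀, div_pow, h2, hCidef, hAdef]
    field_simp
    ring
  intro t ht0 htτ R hRi hRe
  have ht2 : t ^ 2 < τ ^ 2 := by nlinarith
  have hGt : 0 < 1 - t ^ 2 / τ ^ 2 := hGpos t ht2
  have hGtne : (1 - t ^ 2 / τ ^ 2) ≠ 0 := ne_of_gt hGt
  have htt : τ ^ 2 - t ^ 2 ≠ 0 := by nlinarith
  have hht2 : h t ^ 2 = 1 - t ^ 2 / τ ^ 2 := hhs2 t ht2
  have hhtpos : 0 < h t := by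
    rw [hh]
    exact Real.sqrt_pos.mpr hGt
  have hRpos : 0 < R := lt_of_lt_of_le (mul_pos hhtpos hri) hRi
  have hRne : R ≠ 0 := ne_of_gt hRpos
  have hmem : Set.Ioo (-τ) τ ∈ nhds t := isOpen_Ioo.mem_nhds ⟨by linarith, htτ⟩
  -- time derivative of rho
  have hG : HasDerivAt (fun s : ℝ => 1 - s ^ 2 / τ ^ 2) (-(2 * t / τ ^ 2)) t := by
    have := ((hasDerivAt_pow 2 t).div_const (τ ^ 2)).const_sub 1
    simpa using this
  have heqT : (fun s => ρ R s) =ᶠ[nhds t]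
      (fun s => Ci / (1 - s ^ 2 / τ ^ 2) + A * R ^ 2 / (1 - s ^ 2 / τ ^ 2) ^ 2) := by
    filter_upwards [hmem] with s hs
    exact key R s (sq_lt_sq' hs.1 hs.2)
  have hρT := ((hasDerivAt_const t Ci).div hG hGtne).add
    ((hasDerivAt_const t (A * R ^ 2)).div (hG.pow 2) (pow_ne_zero 2 hGtne))
  -- radial derivative of R*rho*U
  have hfunR : (fun a => a * ρ a t * U a t) =
      (fun a => (-(t * Ci) / (τ ^ 2 * (1 - t ^ 2 / τ ^ 2) ^ 2)) * a ^ 2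
        + (-(t * A) / (τ ^ 2 * (1 - t ^ 2 / τ ^ 2) ^ 3)) * a ^ 4) := by
    funext a
    rw [key a t ht2, hU, hht2]
    field_simp
    ring
  have hRρU := ((hasDerivAt_pow 2 R).const_mul
      (-(t * Ci) / (τ ^ 2 * (1 - t ^ 2 / τ ^ 2) ^ 2))).add
    ((hasDerivAt_pow 4 R).const_mul (-(t * A) / (τ ^ 2 * (1 - t ^ 2 / τ ^ 2) ^ 3)))
  -- time derivative of U
  have heqU : (fun s => U R s) =ᶠ[nhds t]
      (fun s => -(s * R) / (τ ^ 2 * (1 - s ^ 2 / τ ^ 2))) := by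
    filter_upwards [hmem] with s hs
    rw [hU, hhs2 s (sq_lt_sq' hs.1 hs.2)]
  have hUt : HasDerivAt (fun s : ℝ => -(s * R) / (τ ^ 2 * (1 - s ^ 2 / τ ^ 2)))
      ((-R * (τ ^ 2 * (1 - t ^ 2 / τ ^ 2)) - -(t * R) * (τ ^ 2 * -(2 * t / τ ^ 2)))
        / (τ ^ 2 * (1 - t ^ 2 / τ ^ 2)) ^ 2) t := by
    have hnum : HasDerivAt (fun s : ℝ => -(s * R)) (-R) t := by
      have := ((hasDerivAt_id t).mul_const R).neg
      simp only [id_eq, one_mul] at this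
      exact this
    exact hnum.div (hG.const_mul (τ ^ 2)) (mul_ne_zero (pow_ne_zero 2 hτne) hGtne)
  -- radial derivative of U
  have hfunU : (fun a => U a t) =
      (fun a => (-t / (τ ^ 2 * (1 - t ^ 2 / τ ^ 2))) * a ^ 1) := by
    funext a
    rw [hU, hht2]
    ring
  have hUR := (hasDerivAt_pow 1 R).const_mul (-t / (τ ^ 2 * (1 - t ^ 2 / τ ^ 2)))
  -- radial derivative of p
  have hfunp : (fun a => p a t) =
      (fun a => Ci ^ 2 / (1 - t ^ 2 / τ ^ 2) ^ 2
        + (2 * Ci * A / (1 - t ^ 2 / τ ^ 2) ^ 3) * a ^ 2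
        + (A ^ 2 / (1 - t ^ 2 / τ ^ 2) ^ 4) * a ^ 4) := by
    funext a
    rw [hp, key a t ht2]
    field_simp
    ring
  have hpR := ((((hasDerivAt_pow 2 R).const_mul
      (2 * Ci * A / (1 - t ^ 2 / τ ^ 2) ^ 3)).const_add
      (Ci ^ 2 / (1 - t ^ 2 / τ ^ 2) ^ 2)).add
    ((hasDerivAt_pow 4 R).const_mul (A ^ 2 / (1 - t ^ 2 / τ ^ 2) ^ 4)))
  -- positivity of rho
  have hρval : ρ R t = Ci / (1 - t ^ 2 / τ ^ 2) + A * R ^ 2 / (1 - t ^ 2 / τ ^ 2) ^ 2 :=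
    key R t ht2
  have hRsq : (1 - t ^ 2 / τ ^ 2) * r_i ^ 2 ≤ R ^ 2 := by
    have h3 : (h t * r_i) ^ 2 ≤ R ^ 2 :=
      pow_le_pow_left₀ (le_of_lt (mul_pos hhtpos hri)) hRi 2
    rw [mul_pow, hht2] at h3
    exact h3
  have hρpos : 0 < ρ R t := by
    rw [hρval]
    have h1 : Ci / (1 - t ^ 2 / τ ^ 2) + A * R ^ 2 / (1 - t ^ 2 / τ ^ 2) ^ 2
        = (Ci * (1 - t ^ 2 / τ ^ 2) + A * R ^ 2) / (1 - t ^ 2 / τ ^ 2) ^ 2 := by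
      field_simp
    rw [h1]
    apply div_pos _ (by positivity)
    have h4 := mul_le_mul_of_nonneg_left hRsq hA.le
    nlinarith [mul_pos hGt hρi]
  have hρne2 : Ci / (1 - t ^ 2 / τ ^ 2) + A * R ^ 2 / (1 - t ^ 2 / τ ^ 2) ^ 2 ≠ 0 :=
    hρval ▸ ne_of_gt hρpos
  constructor
  · show deriv (fun s => ρ R s) t + (1 / R) * deriv (fun a => a * ρ a t * U a t) R = 0
    rw [heqT.deriv_eq, HasDerivAt.deriv (f := fun s => Ci / (1 - s ^ 2 / τ ^ 2) + A * R ^ 2 / (1 - s ^ 2 / τ ^ 2) ^ 2) hρT, hfunR,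
      HasDerivAt.deriv (f := fun a => (-(t * Ci) / (τ ^ 2 * (1 - t ^ 2 / τ ^ 2) ^ 2)) * a ^ 2
        + (-(t * A) / (τ ^ 2 * (1 - t ^ 2 / τ ^ 2) ^ 3)) * a ^ 4) hRρU]
    simp only [Pi.pow_apply]
    push_cast
    field_simp
    ring
  · show deriv (fun s => U R s) t + U R t * deriv (fun a => U a t) R
      + (1 / ρ R t) * deriv (fun a => p a t) R = 0
    have hfactor : (2 * Ci * A / (1 - t ^ 2 / τ ^ 2) ^ 3 * (((2:ℕ):ℝ) * R ^ (2 - 1))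
          + A ^ 2 / (1 - t ^ 2 / τ ^ 2) ^ 4 * (((4:ℕ):ℝ) * R ^ (4 - 1)))
        = (Ci / (1 - t ^ 2 / τ ^ 2) + A * R ^ 2 / (1 - t ^ 2 / τ ^ 2) ^ 2)
            * (4 * A * R / (1 - t ^ 2 / τ ^ 2) ^ 2) := by
      push_cast
      field_simp
      ring
    have hcancel : (1 / ρ R t) * (2 * Ci * A / (1 - t ^ 2 / τ ^ 2) ^ 3 * (((2:ℕ):ℝ) * R ^ (2 - 1))
          + A ^ 2 / (1 - t ^ 2 / τ ^ 2) ^ 4 * (((4:ℕ):ℝ) * R ^ (4 - 1)))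
        = 4 * A * R / (1 - t ^ 2 / τ ^ 2) ^ 2 := by
      rw [hρval, hfactor, one_div, inv_mul_cancel_left₀ hρne2]
    rw [heqU.deriv_eq, hUt.deriv, hfunU, hUR.deriv, hfunp, HasDerivAt.deriv (f := fun a => Ci ^ 2 / (1 - t ^ 2 / τ ^ 2) ^ 2
          + (2 * Ci * A / (1 - t ^ 2 / τ ^ 2) ^ 3) * a ^ 2
          + (A ^ 2 / (1 - t ^ 2 / τ ^ 2) ^ 4) * a ^ 4) hpR, hcancel, hU, hht2, hA4]
    push_cast
    field_simp
    ring
end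
end
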